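/- Let μ, α ∈ ℝ and n ∈ ℝ with n ≠ 0. Define f_n : ℝ → ℝ by f_n(λ) := (λ^n − λ^(−n)) / (2n) (real powers of positive reals), and the 2×2 real matrices P₁ := (1/2) • ![![1, 1], ![1, 1]], P₂ := (1/2) • ![![1, −1], ![−1, 1]]. Then 2μ • (f_n(exp α) • P₁ + f_n(exp(−α)) • P₂) = ((μ/n)·(exp(n·α) − exp(−n·α))) • ![![0, 1], ![1, 0]]. In particular the Cauchy stress of the two-power Ogden (Bažant–Itskov) model under LFSS deformation is an Eulerian pure shear stress with s(α) = (μ/n)(e^(nα) − e^(−nα)). -/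

import Mathlib

open Matrix Real

/-- Eqs. (4-30)–(4-31): for the two-power Ogden (Bažant–Itskov) model, LFSS
deformation leads to an Eulerian pure shear stress with
`s(α) = (μ/n)(e^(nα) − e^(−nα))`. -/
theorem two_power_ogden_lfss_pure_shear (μ α n : ℝ) (hn : n ≠ 0) :
    let f_n : ℝ → ℝ := fun lam => (lam ^ n - lam ^ (-n)) / (2*n)
    let P₁ : Matrix (Fin 2) (Fin 2) ℝ := (1/2 : ℝ) • !![1, 1; 1, 1]
    let P₂ : Matrix (Fin 2) (Fin 2) ℝ := (1/2 : ℝ) • !![1, -1; -1, 1]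
    (2*μ) • (f_n (Real.exp α) • P₁ + f_n (Real.exp (-α)) • P₂) =
      ((μ/n) * (Real.exp (n*α) - Real.exp (-(n*α)))) • !![0, 1; 1, 0] := by
  intro f_n P₁ P₂
  have key : ∀ m x : ℝ, Real.exp x ^ m = Real.exp (m * x) := by
    intro m x
    rw [Real.rpow_def_of_pos (Real.exp_pos x), Real.log_exp, mul_comm]
  have hf : ∀ x : ℝ, f_n (Real.exp x) = (Real.exp (n*x) - Real.exp (-(n*x))) / (2*n) := by
    intro x
    simp only [f_n, key, neg_mul]
  ext i j
  fin_cases i <;> fin_cases j <;>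
    simp [P₁, P₂, hf, Matrix.smul_apply, Matrix.add_apply, mul_neg, neg_mul, neg_neg] <;>
    field_simp <;> ring_nf <;> simp only [or_true]
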